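/- Let D be a finite set of positive integers, q : D → ℝ with q_k > 0 for all k ∈ D and Σ_{k∈D} q_k = 1, and let c_k > 0 for each k ∈ D. Let δ* be a degree-based equilibrium with v(δ*) > 0. If k ∈ D satisfies c_k < 1/k, then δ*_k > 0. -/

import Mathlib

open Classical in
/-- The endemic-state neighbor infection probability `v(δ)`: a solution `v ∈ (0,1]` of
the consistency equation `Σ_{i∈D} i q_i / (δ_i + i v) = 1` if one exists (it is then
unique for nonnegative curing rates), and `0` otherwise. -/
noncomputable def vstar (D : Finset ℕ) (q : ℕ → ℝ) (δ : ℕ → ℝ) : ℝ :=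
  if h : ∃ v : ℝ, v ∈ Set.Ioc (0 : ℝ) 1 ∧
      ∑ i ∈ D, (i : ℝ) * q i / (δ i + (i : ℝ) * v) = 1 then h.choose else 0

/-- The steady-state infection probability of degree-`k` nodes:
`x_k(δ) = k v(δ) / (δ_k + k v(δ))` if `v(δ) > 0`, and `0` otherwise. -/
noncomputable def xinf (D : Finset ℕ) (q : ℕ → ℝ) (δ : ℕ → ℝ) (k : ℕ) : ℝ :=
  if 0 < vstar D q δ then (k : ℝ) * vstar D q δ / (δ k + (k : ℝ) * vstar D q δ) else 0

/-- The expected cost of degree-`k` nodes: `J_k(δ) = x_k(δ) + c_k δ_k`. -/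
noncomputable def cost (D : Finset ℕ) (q : ℕ → ℝ) (c : ℕ → ℝ) (δ : ℕ → ℝ) (k : ℕ) : ℝ :=
  xinf D q δ k + c k * δ k

/-- At any degree-based equilibrium `δ*` with `v(δ*) > 0`, every
degree `k ∈ D` whose per-unit curing cost satisfies `c_k < 1/k` chooses a strictly
positive curing rate. -/
theorem dbe_positive_when_cost_low
    (D : Finset ℕ) (hD : ∀ k ∈ D, 0 < k)
    (q : ℕ → ℝ) (hq : ∀ k ∈ D, 0 < q k) (hqsum : ∑ k ∈ D, q k = 1)
    (c : ℕ → ℝ) (hc : ∀ k ∈ D, 0 < c k)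
    (δstar : ℕ → ℝ)
    (hfeas : ∀ k ∈ D, δstar k ∈ Set.Icc (0 : ℝ) (1 / c k))
    (hdbe : ∀ k ∈ D, ∀ s ∈ Set.Icc (0 : ℝ) (1 / c k),
      cost D q c δstar k ≤ cost D q c (Function.update δstar k s) k)
    (hv : 0 < vstar D q δstar) :
    ∀ k ∈ D, c k < 1 / (k : ℝ) → 0 < δstar k := by
  have vle : ∀ δ : ℕ → ℝ, 0 < vstar D q δ → vstar D q δ ≤ 1 := by
    intro δ h
    unfold vstar at h ⊢
    by_cases hh : ∃ v : ℝ, v ∈ Set.Ioc (0 : ℝ) 1 ∧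
        ∑ i ∈ D, (i : ℝ) * q i / (δ i + (i : ℝ) * v) = 1
    · rw [dif_pos hh]; exact hh.choose_spec.1.2
    · rw [dif_neg hh] at h; exact absurd h (lt_irrefl 0)
  intro k hk hck
  by_contra hpos
  have hδ0 : δstar k = 0 := le_antisymm (not_lt.mp hpos) (hfeas k hk).1
  have hkpos : (0 : ℝ) < (k : ℝ) := by exact_mod_cast hD k hk
  have hckpos : 0 < c k := hc k hk
  have hck1 : c k * (k : ℝ) < 1 := (lt_div_iff₀ hkpos).mp hck
  have hinv : (k : ℝ) < 1 / c k := (lt_div_iff₀ hckpos).mpr (by linarith [mul_comm (c k) (k:ℝ)])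
  set s : ℝ := (1 / c k - k) / 2 with hs
  have hs0 : 0 < s := by simp only [hs]; linarith
  have hsmem : s ∈ Set.Icc (0 : ℝ) (1 / c k) := by
    refine ⟨hs0.le, ?_⟩
    have : 0 < 1 / c k := by positivity
    simp only [hs]; linarith
  have heq : c k * s = (1 - c k * (k : ℝ)) / 2 := by
    simp only [hs]; field_simp
  have hckk0 : 0 < c k * (k : ℝ) := mul_pos hckpos hkpos
  have hcost1 : cost D q c δstar k = 1 := by
    simp only [cost, xinf, if_pos hv, hδ0, mul_zero, add_zero, zero_add]
    rw [div_self (by positivity)]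
  have hmain := hdbe k hk s hsmem
  rw [hcost1] at hmain
  set δ' := Function.update δstar k s with hδ'
  have hδ'k : δ' k = s := Function.update_self k s δstar
  have hcost2 : cost D q c δ' k < 1 := by
    unfold cost xinf
    rw [hδ'k]
    by_cases hv' : 0 < vstar D q δ'
    · rw [if_pos hv']
      set v' := vstar D q δ' with hv'def
      have hv'1 : v' ≤ 1 := vle δ' hv'
      have ha : 0 < (k : ℝ) * v' := by positivity
      have hsa : 0 < s + (k : ℝ) * v' := by linarith
      have hkv : (k : ℝ) * v' ≤ (k : ℝ) := by nlinarith
      have key : c k * (s + (k : ℝ) * v') < 1 := by nlinarith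
      have hrw : (k : ℝ) * v' / (s + (k : ℝ) * v') = 1 - s / (s + (k : ℝ) * v') := by
        field_simp
        ring
      rw [hrw]
      have h2 : c k * s < s / (s + (k : ℝ) * v') := by
        rw [lt_div_iff₀ hsa]; nlinarith
      linarith
    · rw [if_neg hv']
      nlinarith
  linarith
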